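/- Let h : I → ℝ be a measurable function on an interval I ⊆ ℝ and let a > 0. For any ν ∈ 𝒫₁(a^{−1}I), the pushforward ν_{#a} := (D_a)_*ν under the dilation D_a(s) = as lies in 𝒫_{a²}(I), and ∫ h(as) dν(s) − D_KL(ν|γ) = ∫ h dν_{#a} − D_KL(ν_{#a}|γ) − ½(1−a²) − log a. In particular, sup_{ν ∈ 𝒫₁(a^{−1}I)} { ∫ h(as) dν(s) − D_KL(ν|γ) } = sup_{ν ∈ 𝒫_{a²}(I)} { ∫ h dν − D_KL(ν|γ) } − ½(1−a²) − log a. -/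

import Mathlib

open MeasureTheory ProbabilityTheory
open scoped ENNReal NNReal Topology

noncomputable section

namespace WignerLDP

/-- The (two-sided) log-Laplace transform of `μ`. -/
def logLaplace (μ : Measure ℝ) (t : ℝ) : ℝ :=
  Real.log (∫ x, Real.exp (t * x) ∂μ)

/-- `ψ_μ(t) = Λ_μ(t)/t²`, extended by `ψ_μ(0) = 1/2`. -/
def psiMu (μ : Measure ℝ) (t : ℝ) : ℝ :=
  if t = 0 then 1 / 2 else logLaplace μ t / t ^ 2

/-- `ψ_μ^max = sup_{t ∈ ℝ} ψ_μ(t)`. -/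
def psiMax (μ : Measure ℝ) : ℝ :=
  sSup (Set.range (psiMu μ))

/-- `ψ_μ^∞ = limsup_{|t| → ∞} ψ_μ(t)`. -/
def psiInf (μ : Measure ℝ) : ℝ :=
  Filter.limsup (psiMu μ) (Filter.atBot ⊔ Filter.atTop)

/-- `μ` is centered with unit second moment. -/
def Standardized (μ : Measure ℝ) : Prop :=
  Integrable (fun x : ℝ => x) μ ∧ Integrable (fun x : ℝ => x ^ 2) μ ∧
    (∫ x, x ∂μ) = 0 ∧ (∫ x, x ^ 2 ∂μ) = 1

/-- sub-Gaussian (SG): finite exponential moments and `ψ_μ^max < ∞`. -/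
def SubG (μ : Measure ℝ) : Prop :=
  (∀ t : ℝ, Integrable (fun x => Real.exp (t * x)) μ) ∧
    ∃ K : ℝ, ∀ t : ℝ, t ≠ 0 → logLaplace μ t / t ^ 2 ≤ K

/-- uniformly sub-Gaussian tilts (USG): `sup_t Λ_μ''(t) < ∞`. -/
def USG (μ : Measure ℝ) : Prop :=
  (∀ t : ℝ, Integrable (fun x => Real.exp (t * x)) μ) ∧
    ContDiff ℝ 2 (logLaplace μ) ∧
    ∃ C : ℝ, ∀ t : ℝ, deriv (deriv (logLaplace μ)) t ≤ C

/-- Configuration space for the independent entries on and above the diagonal. -/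
abbrev Config (N : ℕ) : Type :=
  { p : Fin N × Fin N // p.1 ≤ p.2 } → ℝ

/-- Joint law of the array of i.i.d. entries with marginal `μ`. -/
def wignerMeasure (μ : Measure ℝ) (N : ℕ) : Measure (Config N) :=
  Measure.pi fun _ => μ

/-- The symmetric array `X_{ij}` of entries. -/
def entry (N : ℕ) (ω : Config N) (i j : Fin N) : ℝ :=
  if h : i ≤ j then ω ⟨(i, j), h⟩ else ω ⟨(j, i), le_of_not_ge h⟩

/-- The Wigner matrix `H_{ij} = √(2^{1(i=j)}/N) X_{ij}`. -/
def wignerMatrix (N : ℕ) (ω : Config N) : Matrix (Fin N) (Fin N) ℝ :=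
  fun i j => Real.sqrt ((if i = j then 2 else 1) / (N : ℝ)) * entry N ω i j

/-- Largest eigenvalue of a symmetric matrix. -/
def lambda1 {N : ℕ} (M : Matrix (Fin N) (Fin N) ℝ) : ℝ :=
  sSup (spectrum ℝ M)

/-- The ℓ² → ℓ² operator norm. -/
def opNorm {N : ℕ} (M : Matrix (Fin N) (Fin N) ℝ) : ℝ :=
  sSup { r | ∃ u : Fin N → ℝ, (∑ i, u i ^ 2) = 1 ∧
    r = Real.sqrt (∑ i, (M.mulVec u i) ^ 2) }

/-- `v` is a unit eigenvector of `M` for the top eigenvalue. -/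
def IsTopEigenvector {N : ℕ} (M : Matrix (Fin N) (Fin N) ℝ) (v : Fin N → ℝ) : Prop :=
  (∑ i, v i ^ 2) = 1 ∧ M.mulVec v = lambda1 M • v

/-- The semicircle measure. -/
def semicircle : Measure ℝ :=
  volume.withDensity fun x => ENNReal.ofReal (Real.sqrt (4 - x ^ 2) / (2 * Real.pi))

/-- `θ_-(x) = (x - √(x²-4))/4`. -/
def thetaMinus (x : ℝ) : ℝ := (x - Real.sqrt (x ^ 2 - 4)) / 4

/-- The limiting quenched free energy `J(x,θ)`. -/
def Jfun (x θ : ℝ) : ℝ :=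
  if θ ≤ thetaMinus x then θ ^ 2
  else θ * x - (1 / 2) * (∫ l, Real.log (x - l) ∂semicircle)
        - (1 / 2) * Real.log (2 * θ) - 1 / 2

/-- `q_x(θ) = (1 - θ_-(x)/θ)_+^{1/2}`, with `q_x(0) = 0`. -/
def qfun (x θ : ℝ) : ℝ :=
  if θ = 0 then 0 else Real.sqrt (max 0 (1 - thetaMinus x / θ))

/-- GOE rate function (value for `x ≥ 2`). -/
def IgammaR (x : ℝ) : ℝ := (1 / 2) * ∫ y in (2:ℝ)..x, Real.sqrt (y ^ 2 - 4)

/-- GOE rate function with value `∞` below `2`. -/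
def IgammaE (x : ℝ) : ℝ≥0∞ := if 2 ≤ x then ENNReal.ofReal (IgammaR x) else ⊤

/-- The standard Gaussian measure on `ℝ`. -/
def stdGaussian : Measure ℝ := gaussianReal 0 1

/-- Borel probability measure supported on `S` with second moment `α`. -/
def IsP2 (ν : Measure ℝ) (S : Set ℝ) (α : ℝ) : Prop :=
  IsProbabilityMeasure ν ∧ ν Sᶜ = 0 ∧ Integrable (fun s : ℝ => s ^ 2) ν ∧
    (∫ s, s ^ 2 ∂ν) = α

/-- `ν` has finite relative entropy w.r.t. the standard Gaussian. -/
def FiniteKL (ν : Measure ℝ) : Prop :=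
  ν ≪ stdGaussian ∧
    Integrable (fun s => Real.log ((ν.rnDeriv stdGaussian s).toReal)) ν

/-- The relative entropy `D_KL(ν|γ)` (as a real number; meaningful under `FiniteKL`). -/
def klReal (ν : Measure ℝ) : ℝ :=
  ∫ s, Real.log ((ν.rnDeriv stdGaussian s).toReal) ∂ν

/-- `s ↦ Σ_i Λ_μ(2 v_i s)`. -/
def hsum (μ : Measure ℝ) (v : ℕ → ℝ) (s : ℝ) : ℝ :=
  ∑' i, logLaplace μ (2 * v i * s)

/-- `Φ_R(v,α)`: constrained Gibbs variational problem on `[-R,R]`. -/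
def PhiR (μ : Measure ℝ) (R : ℝ) (v : ℕ → ℝ) (α : ℝ) : ℝ :=
  sSup { r | ∃ ν : Measure ℝ, IsP2 ν (Set.Icc (-R) R) α ∧ FiniteKL ν ∧
    Integrable (hsum μ v) ν ∧ r = (∫ s, hsum μ v s ∂ν) - klReal ν }

/-- Squared ℓ² norm of a sequence. -/
def l2sq (v : ℕ → ℝ) : ℝ := ∑' i, v i ^ 2

/-- The localized free energy contribution `Φ^loc_N(θ,w)`. -/
def PhiLoc (μ : Measure ℝ) (N : ℕ) (θ : ℝ) (w : ℕ → ℝ) : ℝ :=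
  (1 / (N : ℝ)) * ∑ i ∈ Finset.range N, ∑ j ∈ Finset.range N,
    (if i ≤ j then
      logLaplace μ ((if i = j then Real.sqrt 2 else 2) * (θ * Real.sqrt (N : ℝ) * w i * w j))
    else 0)

/-- The asymptotic restricted annealed free energy `Φ_{N,R}(θ,w)`. -/
def PhiNR (μ : Measure ℝ) (N : ℕ) (R θ : ℝ) (w : ℕ → ℝ) : ℝ :=
  θ ^ 2 * (1 - l2sq w) ^ 2 + PhiLoc μ N θ w +
    PhiR μ R (fun i => θ * w i) (1 - l2sq w) - l2sq w / 2

/-- `𝒥_{N,R}(x,z) = sup_{θ ≥ 0} { J(x,θ) - Φ_{N,R}(θ, q_x(θ) z) }`. -/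
def JNR (μ : Measure ℝ) (N : ℕ) (R x : ℝ) (z : ℕ → ℝ) : ℝ :=
  sSup { r | ∃ θ : ℝ, 0 ≤ θ ∧
    r = Jfun x θ - PhiNR μ N R θ (fun i => qfun x θ * z i) }

/-- The radius-`ρ` ball of sequences supported on the first `n` coordinates. -/
def ballSupp (n : ℕ) (ρ : ℝ) : Set (ℕ → ℝ) :=
  { z | (∀ i, n ≤ i → z i = 0) ∧ l2sq z ≤ ρ ^ 2 }

/-- The finite-`N` rate function `I^μ_N(x)` with `n = ⌊N^{3/4}⌋`, `ζ_x = c/x⁴`. -/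
def rateN (μ : Measure ℝ) (c : ℝ) (N : ℕ) (x : ℝ) : ℝ :=
  sInf { r | ∃ z ∈ ballSupp (Nat.floor ((N : ℝ) ^ ((3:ℝ)/4))) (1 - c / x ^ 4),
    r = JNR μ N ((N : ℝ) ^ ((1:ℝ)/5)) x z }

/-- Embed a finite vector into `ℓ²(ℕ)`. -/
def embed {N : ℕ} (w : Fin N → ℝ) : ℕ → ℝ :=
  fun i => if h : i < N then w ⟨i, h⟩ else 0

/-- `v^{(η)}`: restriction to coordinates with `|v_i| > N^{-1/2+η}`. -/
def truncVec (N : ℕ) (η : ℝ) (v : Fin N → ℝ) : Fin N → ℝ :=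
  fun i => if (N : ℝ) ^ (-(1:ℝ)/2 + η) < |v i| then v i else 0

/-- `v^{(η)}`: restriction to coordinates with `|v_i| ≥ N^{-1/2+η}`. -/
def truncVecGe (N : ℕ) (η : ℝ) (v : Fin N → ℝ) : Fin N → ℝ :=
  fun i => if (N : ℝ) ^ (-(1:ℝ)/2 + η) ≤ |v i| then v i else 0

/-- The quadratic form `⟨u, M u⟩`. -/
def quadForm {N : ℕ} (M : Matrix (Fin N) (Fin N) ℝ) (u : Fin N → ℝ) : ℝ :=
  ∑ i, ∑ j, u i * M i j * u j

/-- Standard Gaussian measure on `ℝ^N`. -/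
def gaussPi (N : ℕ) : Measure (Fin N → ℝ) := Measure.pi fun _ => stdGaussian

/-- The uniform probability measure on the unit sphere `S^{N-1}`. -/
def sphereUniform (N : ℕ) : Measure (Fin N → ℝ) :=
  Measure.map (fun v i => (Real.sqrt (∑ j, v j ^ 2))⁻¹ * v i) (gaussPi N)

/-- The restricted annealed free energy `F_N(θ; U)`. -/
def FNres (μ : Measure ℝ) (N : ℕ) (θ : ℝ) (U : Set (Fin N → ℝ)) : ℝ :=
  (1 / (N : ℝ)) * Real.log (∫ ω,
    (∫ u in U, Real.exp ((N : ℝ) * θ * quadForm (wignerMatrix N ω) u) ∂(sphereUniform N))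
      ∂(wignerMeasure μ N))

/-- The set `𝒰^N_w(ρ,R)` of unit vectors close to `w` on its support and
delocalized elsewhere. -/
def UsetW (N : ℕ) (w : Fin N → ℝ) (ρ R : ℝ) : Set (Fin N → ℝ) :=
  { u | (∑ i, u i ^ 2) = 1 ∧
      Real.sqrt (∑ i, (if w i = 0 then 0 else u i - w i) ^ 2) ≤ ρ ∧
      ∀ i, w i = 0 → |u i| ≤ R / Real.sqrt (N : ℝ) }

/-- Density of the tilted law `P^{(θ,u)}`. -/
def tiltDensity (μ : Measure ℝ) (N : ℕ) (θ : ℝ) (u : Fin N → ℝ) (ω : Config N) : ℝ :=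
  Real.exp ((N : ℝ) * θ * quadForm (wignerMatrix N ω) u) /
    ∫ ω', Real.exp ((N : ℝ) * θ * quadForm (wignerMatrix N ω') u) ∂(wignerMeasure μ N)

/-- The tilted law `P^{(θ,u)}`. -/
def tiltedWigner (μ : Measure ℝ) (N : ℕ) (θ : ℝ) (u : Fin N → ℝ) : Measure (Config N) :=
  (wignerMeasure μ N).withDensity fun ω => ENNReal.ofReal (tiltDensity μ N θ u ω)

/-- The tilted mean `E^{(θ,u)} λ₁`. -/
def tiltedMean (μ : Measure ℝ) (N : ℕ) (θ : ℝ) (u : Fin N → ℝ) : ℝ :=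
  ∫ ω, lambda1 (wignerMatrix N ω) ∂(tiltedWigner μ N θ u)

/-- The ℓ²-Wasserstein (permutation) distance between two vectors. -/
def wasser2 {N : ℕ} (u v : Fin N → ℝ) : ℝ :=
  sInf { r | ∃ σ : Equiv.Perm (Fin N), r = Real.sqrt (∑ i, (u i - v (σ i)) ^ 2) }

/-- A good rate function. -/
def GoodRate (I : ℝ → ℝ≥0∞) : Prop :=
  LowerSemicontinuous I ∧ (∃ x, I x ≠ ⊤) ∧
    ∀ a : ℝ≥0∞, a ≠ ⊤ → IsCompact { x | I x ≤ a }

/-- Large deviation principle with speed `N` for the family of laws `p`. -/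
def LDPle (p : ℕ → Set ℝ → ℝ≥0∞) (I : ℝ → ℝ≥0∞) : Prop :=
  ∀ E : Set ℝ, MeasurableSet E →
    (-(⨅ y ∈ interior E, ENNReal.toEReal (I y)) ≤
      Filter.liminf
        (fun N : ℕ => ((1 / (N : ℝ) * Real.log ((p N E).toReal) : ℝ) : EReal))
        Filter.atTop) ∧
    (Filter.limsup
        (fun N : ℕ => ((1 / (N : ℝ) * Real.log ((p N E).toReal) : ℝ) : EReal))
        Filter.atTop ≤
      -(⨅ y ∈ closure E, ENNReal.toEReal (I y)))

/-- The laws of `λ₁(H_N)`. -/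
def wignerLawFamily (μ : Measure ℝ) : ℕ → Set ℝ → ℝ≥0∞ :=
  fun N E => wignerMeasure μ N { ω | lambda1 (wignerMatrix N ω) ∈ E }

/-- The reduced free energy `F̃_{N,R}(θ, w̌, α̃)`. -/
def FtildeNR (μ : Measure ℝ) (ψinf R θ : ℝ) (w : ℕ → ℝ) (α : ℝ) : ℝ :=
  θ ^ 2 * ((1 - α - l2sq w) ^ 2 + 2 * (1 - α - l2sq w) * α + 2 * psiMax μ * α ^ 2
      + 2 * ψinf * ((l2sq w) ^ 2 + 2 * α * l2sq w))
    + PhiR μ R (fun i => θ * w i) (1 - α - l2sq w) - (α + l2sq w) / 2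

/-- `𝒥̃_{N,R}(x, ž, α̃)`. -/
def JtildeNR (μ : Measure ℝ) (ψinf R x : ℝ) (z : ℕ → ℝ) (α : ℝ) : ℝ :=
  sSup { r | ∃ θ : ℝ, 0 ≤ θ ∧
    r = Jfun x θ - FtildeNR μ ψinf R θ (fun i => qfun x θ * z i) (qfun x θ ^ 2 * α) }

/-- `B_{≥ξ}`: unit-ball sequences with all nonzero entries of modulus in `[ξ,1]`. -/
def BgeXi (ξ : ℝ) : Set (ℕ → ℝ) :=
  { z | l2sq z ≤ 1 ∧ ∀ j, z j = 0 ∨ (ξ ≤ |z j| ∧ |z j| ≤ 1) }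

/-- `Ĩ_{N,ξ}(x,ζ)`. -/
def ItildeN (μ : Measure ℝ) (ψinf : ℝ) (N : ℕ) (ξ x ζ : ℝ) : ℝ :=
  sInf { r | ∃ α : ℝ, α ∈ Set.Icc 0 (1 - ζ) ∧ ∃ z ∈ BgeXi ξ,
    l2sq z ≤ 1 - ζ - α ∧ r = JtildeNR μ ψinf ((N : ℝ) ^ ((1:ℝ)/5)) x z α }

/-- `ĥΦ(θ,α)`. -/
def hPhi (μ : Measure ℝ) (ψinf θ α : ℝ) : ℝ :=
  θ ^ 2 * ((1 - α) ^ 2 + 2 * ψinf * α ^ 2)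
    + sSup { r | ∃ ν : Measure ℝ, IsP2 ν Set.univ (1 - α) ∧ FiniteKL ν ∧
        Integrable (fun s => logLaplace μ (2 * θ * Real.sqrt α * s)) ν ∧
        r = (∫ s, logLaplace μ (2 * θ * Real.sqrt α * s) ∂ν) - klReal ν }
    - α / 2

/-- `Ĵ(x,α)`. -/
def Jhat (μ : Measure ℝ) (ψinf x α : ℝ) : ℝ :=
  sSup { r | ∃ θ : ℝ, 0 ≤ θ ∧ r = Jfun x θ - hPhi μ ψinf θ (qfun x θ ^ 2 * α) }

/-- `inf_{0 ≤ α ≤ 1 - c/x⁴} Ĵ(x,α)`. -/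
def rateIncr (μ : Measure ℝ) (ψinf c x : ℝ) : ℝ :=
  sInf { r | ∃ α ∈ Set.Icc (0:ℝ) (1 - c / x ^ 4), r = Jhat μ ψinf x α }

/-- The set `A*_x` of minimizers. -/
def argminIncr (μ : Measure ℝ) (ψinf c x : ℝ) : Set ℝ :=
  { α | α ∈ Set.Icc (0:ℝ) (1 - c / x ^ 4) ∧ Jhat μ ψinf x α = rateIncr μ ψinf c x }

/-- Bernoulli(p) distribution on `{0,1} ⊂ ℝ`. -/
def bern (p : ℝ) : Measure ℝ :=
  (ENNReal.ofReal p) • Measure.dirac (1:ℝ) + (ENNReal.ofReal (1 - p)) • Measure.dirac (0:ℝ)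

/-- Configuration space for the strictly-upper-triangular entries. -/
abbrev ConfigLT (N : ℕ) : Type := { q : Fin N × Fin N // q.1 < q.2 } → ℝ

/-- Joint law of the i.i.d. Bernoulli(p) entries. -/
def erMeasure (p : ℝ) (N : ℕ) : Measure (ConfigLT N) := Measure.pi fun _ => bern p

/-- The centered adjacency matrix `A - E A` of `G(N,p)`. -/
def erCentered (p : ℝ) (N : ℕ) (ω : ConfigLT N) : Matrix (Fin N) (Fin N) ℝ :=
  fun i j =>
    (if h : i < j then ω ⟨(i, j), h⟩ else if h' : j < i then ω ⟨(j, i), h'⟩ else 0)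
      - (if i = j then 0 else p)

/-- The set of values of `χ(ν) = ∫ h dν - D_KL(ν|γ)` over `𝒫₁([a,b])`. -/
def gibbsSet (a b : ℝ) (h : ℝ → ℝ) : Set ℝ :=
  { r | ∃ ν : Measure ℝ, IsP2 ν (Set.Icc a b) 1 ∧ FiniteKL ν ∧ Integrable h ν ∧
      r = (∫ s, h s ∂ν) - klReal ν }

/-- The exponentially tilted measure `dμ_α = e^{αx - Λ_μ(α)} dμ`. -/
def tiltMeasure (μ : Measure ℝ) (α : ℝ) : Measure ℝ :=
  μ.withDensity fun x => ENNReal.ofReal (Real.exp (α * x - logLaplace μ α))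

/-- CDF of the tilted measure. -/
def tiltCDF (μ : Measure ℝ) (α x : ℝ) : ℝ := (tiltMeasure μ α (Set.Iic x)).toReal

/-- `φ_α(t) = sup { x : F_α(x) ≤ t }`. -/
def tiltQuantile (μ : Measure ℝ) (α t : ℝ) : ℝ := sSup { x | tiltCDF μ α x ≤ t }

def scaleEquiv (a : ℝ) (ha : a ≠ 0) : ℝ ≃ᵐ ℝ :=
{ toEquiv := { toFun := fun s => a * s
               invFun := fun x => a⁻¹ * x
               left_inv := fun s => by field_simp
               right_inv := fun x => by field_simp }
  measurable_toFun := measurable_id'.const_mul a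
  measurable_invFun := measurable_id'.const_mul a⁻¹ }

lemma scaleEquiv_coe (a : ℝ) (ha : a ≠ 0) : ⇑(scaleEquiv a ha) = fun s => a * s := rfl
lemma scaleEquiv_symm_coe (a : ℝ) (ha : a ≠ 0) :
    ⇑(scaleEquiv a ha).symm = fun x => a⁻¹ * x := rfl

lemma map_withDensity_equiv (e : ℝ ≃ᵐ ℝ) (μ : Measure ℝ) {g : ℝ → ℝ≥0∞} (hg : Measurable g) :
    (μ.withDensity g).map e = (μ.map e).withDensity (fun x => g (e.symm x)) := by
  ext s hs
  rw [Measure.map_apply e.measurable hs, withDensity_apply _ (e.measurable hs),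
    withDensity_apply _ hs,
    setLIntegral_map (f := fun x => g (e.symm x)) hs (hg.comp e.symm.measurable) e.measurable]
  refine setLIntegral_congr_fun (e.measurable hs) (fun x _ => ?_)
  simp

lemma stdGaussian_map_scale {a : ℝ} (ha : 0 < a) :
    Measure.map (fun s => a * s) stdGaussian =
      stdGaussian.withDensity
        (fun x => ENNReal.ofReal (a⁻¹ * Real.exp ((1 - a⁻¹ ^ 2) * x ^ 2 / 2))) := by
  have h1 : Measure.map (fun s => a * s) stdGaussian
      = gaussianReal 0 ⟨a ^ 2, sq_nonneg a⟩ := by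
    rw [stdGaussian]
    rw [show (fun s : ℝ => a * s) = (a * ·) from rfl, gaussianReal_map_const_mul]
    simp
    rfl
  have ha0 : a ≠ 0 := ha.ne'
  have key : ∀ x : ℝ, gaussianPDFReal 0 1 x * (a⁻¹ * Real.exp ((1 - a⁻¹ ^ 2) * x ^ 2 / 2))
      = gaussianPDFReal 0 ⟨a ^ 2, sq_nonneg a⟩ x := by
    intro x
    show _ = gaussianPDFReal 0 (NNReal.mk (a ^ 2) (sq_nonneg a)) x
    simp only [gaussianPDFReal, NNReal.coe_one, NNReal.coe_mk, mul_one, sub_zero]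
    rw [Real.sqrt_mul (by positivity : (0:ℝ) ≤ 2 * Real.pi) (a ^ 2), Real.sqrt_sq ha.le,
      mul_inv]
    rw [show (Real.sqrt (2 * Real.pi))⁻¹ * Real.exp (-x ^ 2 / 2)
          * (a⁻¹ * Real.exp ((1 - a⁻¹ ^ 2) * x ^ 2 / 2))
        = (Real.sqrt (2 * Real.pi))⁻¹ * a⁻¹
          * (Real.exp (-x ^ 2 / 2) * Real.exp ((1 - a⁻¹ ^ 2) * x ^ 2 / 2)) from by ring,
      ← Real.exp_add]
    congr 1
    field_simp
    ring
  have hne : (⟨a ^ 2, sq_nonneg a⟩ : ℝ≥0) ≠ 0 := by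
    exact fun h => pow_ne_zero 2 ha0 (by have := congrArg NNReal.toReal h; exact this)
  rw [h1, stdGaussian, gaussianReal_of_var_ne_zero _ one_ne_zero,
    gaussianReal_of_var_ne_zero _ hne,
    ← withDensity_mul _ (measurable_gaussianPDF _ _) (by fun_prop)]
  congr 1
  funext x
  rw [Pi.mul_apply]
  unfold gaussianPDF
  rw [
    ← ENNReal.ofReal_mul (gaussianPDFReal_nonneg _ _ _)]
  exact congrArg _ (key x).symm


instance : IsProbabilityMeasure stdGaussian :=
  inferInstanceAs (IsProbabilityMeasure (gaussianReal 0 1))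

lemma map_scale_rnDeriv {a : ℝ} (ha : 0 < a) {ν : Measure ℝ} [SigmaFinite ν]
    (hν : ν ≪ stdGaussian) :
    Measure.map (fun s => a * s) ν ≪ stdGaussian ∧
    (Measure.map (fun s => a * s) ν).rnDeriv stdGaussian =ᵐ[stdGaussian]
      fun x => ENNReal.ofReal (a⁻¹ * Real.exp ((1 - a⁻¹ ^ 2) * x ^ 2 / 2)) *
        ν.rnDeriv stdGaussian (a⁻¹ * x) := by
  have ha0 : a ≠ 0 := ha.ne'
  set f := ν.rnDeriv stdGaussian with hf
  have hfm : Measurable f := Measure.measurable_rnDeriv _ _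
  set d : ℝ → ℝ≥0∞ := fun x => ENNReal.ofReal (a⁻¹ * Real.exp ((1 - a⁻¹ ^ 2) * x ^ 2 / 2))
    with hd
  have hdm : Measurable d := by
    apply Measurable.ennreal_ofReal
    fun_prop
  have hνd : stdGaussian.withDensity f = ν := Measure.withDensity_rnDeriv_eq _ _ hν
  have hmap : Measure.map (fun s => a * s) ν
      = stdGaussian.withDensity (fun x => d x * f (a⁻¹ * x)) := by
    calc Measure.map (fun s => a * s) ν
        = Measure.map (scaleEquiv a ha0) (stdGaussian.withDensity f) := by
          rw [hνd, scaleEquiv_coe]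
      _ = (Measure.map (scaleEquiv a ha0) stdGaussian).withDensity
            (fun x => f ((scaleEquiv a ha0).symm x)) := map_withDensity_equiv _ _ hfm
      _ = (stdGaussian.withDensity d).withDensity (fun x => f (a⁻¹ * x)) := by
          rw [scaleEquiv_coe, stdGaussian_map_scale ha]
          rfl
      _ = stdGaussian.withDensity (fun x => d x * f (a⁻¹ * x)) :=
          (withDensity_mul _ hdm (show Measurable fun x : ℝ => f (a⁻¹ * x) from
            hfm.comp (measurable_id'.const_mul a⁻¹))).symm
  constructor
  · rw [hmap]; exact withDensity_absolutelyContinuous _ _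
  · rw [hmap]
    exact Measure.rnDeriv_withDensity _ (hdm.mul (hfm.comp (measurable_id'.const_mul a⁻¹)))


lemma klReal_map_scale {a : ℝ} (ha : 0 < a) {ν : Measure ℝ} [IsProbabilityMeasure ν]
    (hkl : FiniteKL ν) (hs2 : Integrable (fun s : ℝ => s ^ 2) ν) :
    FiniteKL (Measure.map (fun s => a * s) ν) ∧
    klReal (Measure.map (fun s => a * s) ν)
      = klReal ν - Real.log a + (a ^ 2 - 1) * (∫ s, s ^ 2 ∂ν) / 2 := by
  have ha0 : a ≠ 0 := ha.ne'
  obtain ⟨hac, hint⟩ := hkl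
  obtain ⟨hac', hrn⟩ := map_scale_rnDeriv ha hac
  set f := ν.rnDeriv stdGaussian with hf
  have hfm : Measurable f := Measure.measurable_rnDeriv _ _
  set ν' := Measure.map (fun s => a * s) ν with hν'
  have hmeasa : Measurable (fun s : ℝ => a * s) := measurable_id'.const_mul a
  haveI : IsProbabilityMeasure ν' := Measure.isProbabilityMeasure_map hmeasa.aemeasurable
  have hrn' : ν'.rnDeriv stdGaussian =ᵐ[ν']
      fun x => ENNReal.ofReal (a⁻¹ * Real.exp ((1 - a⁻¹ ^ 2) * x ^ 2 / 2)) * f (a⁻¹ * x) :=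
    hrn.filter_mono hac'.ae_le
  have h1 : ∀ᵐ x ∂ν', f (a⁻¹ * x) ≠ ∞ := by
    rw [hν', ae_map_iff hmeasa.aemeasurable]
    · filter_upwards [hac.ae_le (Measure.rnDeriv_ne_top ν stdGaussian)] with s hs
      simpa [inv_mul_cancel_left₀ ha0] using hs
    · exact (hfm.comp (measurable_id'.const_mul a⁻¹)) (measurableSet_singleton ∞) |>.compl
  have h0 : ∀ᵐ x ∂ν', f (a⁻¹ * x) ≠ 0 := by
    rw [hν', ae_map_iff hmeasa.aemeasurable]
    · filter_upwards [Measure.rnDeriv_pos hac] with s hs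
      simpa [inv_mul_cancel_left₀ ha0] using hs.ne'
    · exact (hfm.comp (measurable_id'.const_mul a⁻¹)) (measurableSet_singleton 0) |>.compl
  have hlog_eq : (fun x => Real.log ((ν'.rnDeriv stdGaussian x).toReal)) =ᵐ[ν']
      fun x => Real.log ((f (a⁻¹ * x)).toReal)
        + Real.log a⁻¹ + ((1 - a⁻¹ ^ 2) / 2) * x ^ 2 := by
    filter_upwards [hrn', h0, h1] with x hx hx0 hx1
    simp only [hx]
    have hdpos : 0 < a⁻¹ * Real.exp ((1 - a⁻¹ ^ 2) * x ^ 2 / 2) := by positivity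
    rw [ENNReal.toReal_mul, ENNReal.toReal_ofReal hdpos.le,
      Real.log_mul hdpos.ne' (by simp [ENNReal.toReal_eq_zero_iff, hx0, hx1]),
      Real.log_mul (inv_ne_zero ha0) (Real.exp_ne_zero _), Real.log_exp]
    ring
  have hAmeas : Measurable fun x : ℝ => Real.log ((f (a⁻¹ * x)).toReal) :=
    Real.measurable_log.comp ((hfm.comp (measurable_id'.const_mul a⁻¹)).ennreal_toReal)
  have hintA : Integrable (fun x => Real.log ((f (a⁻¹ * x)).toReal)) ν' := by
    rw [hν', integrable_map_measure hAmeas.aestronglyMeasurable hmeasa.aemeasurable]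
    refine hint.congr (ae_of_all _ fun s => ?_)
    simp [Function.comp, inv_mul_cancel_left₀ ha0]
  have hintB : Integrable (fun x : ℝ => x ^ 2) ν' := by
    rw [hν', integrable_map_measure (by fun_prop) hmeasa.aemeasurable]
    refine ((hs2.const_mul (a ^ 2)).congr (ae_of_all _ fun s => ?_))
    simp [Function.comp]; ring
  have hI2' : ∫ x, x ^ 2 ∂ν' = a ^ 2 * ∫ s, s ^ 2 ∂ν := by
    rw [hν', integral_map hmeasa.aemeasurable (by fun_prop)]
    simp_rw [mul_pow]
    exact integral_const_mul _ _
  have hintRHS : Integrable (fun x => Real.log ((f (a⁻¹ * x)).toReal)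
      + Real.log a⁻¹ + ((1 - a⁻¹ ^ 2) / 2) * x ^ 2) ν' :=
    (hintA.add (integrable_const _)).add (hintB.const_mul _)
  have hIA : ∫ x, Real.log ((f (a⁻¹ * x)).toReal) ∂ν' = klReal ν := by
    rw [hν', integral_map hmeasa.aemeasurable hAmeas.aestronglyMeasurable, klReal]
    refine integral_congr_ae (ae_of_all _ fun s => ?_)
    simp [inv_mul_cancel_left₀ ha0, hf]
  constructor
  · exact ⟨hac', hintRHS.congr hlog_eq.symm⟩
  · have h := integral_congr_ae hlog_eq
    have hsplit1 : ∫ x, (Real.log ((f (a⁻¹ * x)).toReal)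
          + Real.log a⁻¹ + ((1 - a⁻¹ ^ 2) / 2) * x ^ 2) ∂ν'
        = (∫ x, (Real.log ((f (a⁻¹ * x)).toReal) + Real.log a⁻¹) ∂ν')
          + ∫ x, ((1 - a⁻¹ ^ 2) / 2) * x ^ 2 ∂ν' :=
      integral_add (hintA.add (integrable_const _)) (hintB.const_mul _)
    have hsplit2 : ∫ x, (Real.log ((f (a⁻¹ * x)).toReal) + Real.log a⁻¹) ∂ν'
        = (∫ x, Real.log ((f (a⁻¹ * x)).toReal) ∂ν') + ∫ _x, Real.log a⁻¹ ∂ν' :=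
      integral_add hintA (integrable_const _)
    rw [klReal, h, hsplit1, hsplit2, integral_const, integral_const_mul, hIA,
      hI2', probReal_univ]
    simp only [ENNReal.toReal_one, smul_eq_mul, one_mul]
    rw [Real.log_inv]
    have : (1 - a⁻¹ ^ 2) / 2 * (a ^ 2 * ∫ s, s ^ 2 ∂ν) = (a ^ 2 - 1) * (∫ s, s ^ 2 ∂ν) / 2 := by
      field_simp
    rw [this]
    ring


lemma isP2_map_scale {a : ℝ} (ha : 0 < a) {S : Set ℝ} (hS : MeasurableSet S) {α : ℝ}
    {ν : Measure ℝ} (h : IsP2 ν ((fun s => a * s) ⁻¹' S) α) :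
    IsP2 (Measure.map (fun s => a * s) ν) S (a ^ 2 * α) := by
  obtain ⟨hp, hnull, hint, hval⟩ := h
  haveI := hp
  have hmeasa : Measurable (fun s : ℝ => a * s) := measurable_id'.const_mul a
  refine ⟨Measure.isProbabilityMeasure_map hmeasa.aemeasurable, ?_, ?_, ?_⟩
  · rw [Measure.map_apply hmeasa hS.compl, Set.preimage_compl]
    exact hnull
  · rw [integrable_map_measure (by fun_prop) hmeasa.aemeasurable]
    refine (hint.const_mul (a ^ 2)).congr (ae_of_all _ fun s => ?_)
    simp [Function.comp]; ring
  · rw [integral_map hmeasa.aemeasurable (by fun_prop)]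
    simp_rw [mul_pow]
    rw [integral_const_mul, hval]

lemma ereal_sub_sub (x : EReal) (p q : ℝ) :
    x - (p : EReal) - (q : EReal) = x - ((p + q : ℝ) : EReal) := by
  induction x using EReal.rec with
  | bot => rw [EReal.bot_sub, EReal.bot_sub, EReal.bot_sub]
  | coe r => exact_mod_cast congrArg (Real.toEReal) (by ring : r - p - q = r - (p + q))
  | top => rw [EReal.top_sub_coe, EReal.top_sub_coe, EReal.top_sub_coe]

lemma sSup_shift (S₁ S₂ : Set EReal) (c : ℝ)
    (h₁ : ∀ x ∈ S₁, ∃ y ∈ S₂, x = y - (c : EReal))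
    (h₂ : ∀ y ∈ S₂, ∃ x ∈ S₁, x = y - (c : EReal)) :
    sSup S₁ = sSup S₂ - (c : EReal) := by
  apply le_antisymm
  · refine sSup_le fun x hx => ?_
    obtain ⟨y, hy, rfl⟩ := h₁ x hx
    exact EReal.sub_le_sub (le_sSup hy) le_rfl
  · rw [EReal.sub_le_iff_le_add (Or.inl (EReal.coe_ne_bot c)) (Or.inl (EReal.coe_ne_top c))]
    refine sSup_le fun y hy => ?_
    obtain ⟨x, hx, hxy⟩ := h₂ y hy
    have hle : y - (c : EReal) ≤ sSup S₁ := hxy ▸ le_sSup hx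
    exact (EReal.sub_le_iff_le_add (Or.inl (EReal.coe_ne_bot c))
      (Or.inl (EReal.coe_ne_top c))).1 hle


/-- Lemma (lem:dilate): behavior of the Gibbs variational problem under dilations. -/
theorem dilation_variational
    (h : ℝ → ℝ) (hmeas : Measurable h) (I : Set ℝ) (hI : I.OrdConnected)
    (a : ℝ) (ha : 0 < a) :
    (∀ ν : Measure ℝ, IsP2 ν ((fun s => a * s) ⁻¹' I) 1 →
      IsP2 (Measure.map (fun s => a * s) ν) I (a ^ 2) ∧
      (FiniteKL ν → Integrable (fun s => h (a * s)) ν →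
        FiniteKL (Measure.map (fun s => a * s) ν) ∧
        Integrable h (Measure.map (fun s => a * s) ν) ∧
        (∫ s, h (a * s) ∂ν) - klReal ν =
          (∫ s, h s ∂(Measure.map (fun s => a * s) ν))
            - klReal (Measure.map (fun s => a * s) ν)
            - (1 - a ^ 2) / 2 - Real.log a)) ∧
    sSup { r : EReal | ∃ ν : Measure ℝ, IsP2 ν ((fun s => a * s) ⁻¹' I) 1 ∧ FiniteKL ν ∧
        Integrable (fun s => h (a * s)) ν ∧
        r = (((∫ s, h (a * s) ∂ν) - klReal ν : ℝ) : EReal) } =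
      sSup { r : EReal | ∃ ν : Measure ℝ, IsP2 ν I (a ^ 2) ∧ FiniteKL ν ∧
        Integrable h ν ∧ r = (((∫ s, h s ∂ν) - klReal ν : ℝ) : EReal) }
        - (((1 - a ^ 2) / 2 : ℝ) : EReal) - ((Real.log a : ℝ) : EReal) := by
  have ha0 : a ≠ 0 := ha.ne'
  have hImeas : MeasurableSet I := hI.measurableSet
  have hmeasa : Measurable (fun s : ℝ => a * s) := measurable_id'.const_mul a
  have hmeasainv : Measurable (fun x : ℝ => a⁻¹ * x) := measurable_id'.const_mul a⁻¹
  have part1 : ∀ ν : Measure ℝ, IsP2 ν ((fun s => a * s) ⁻¹' I) 1 →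
      IsP2 (Measure.map (fun s => a * s) ν) I (a ^ 2) ∧
      (FiniteKL ν → Integrable (fun s => h (a * s)) ν →
        FiniteKL (Measure.map (fun s => a * s) ν) ∧
        Integrable h (Measure.map (fun s => a * s) ν) ∧
        (∫ s, h (a * s) ∂ν) - klReal ν =
          (∫ s, h s ∂(Measure.map (fun s => a * s) ν))
            - klReal (Measure.map (fun s => a * s) ν)
            - (1 - a ^ 2) / 2 - Real.log a) := by
    intro ν hP2
    haveI := hP2.1
    have hiso : IsP2 (Measure.map (fun s => a * s) ν) I (a ^ 2) := by
      simpa using isP2_map_scale ha hImeas hP2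
    refine ⟨hiso, fun hkl hinth => ?_⟩
    obtain ⟨hkl', hklval⟩ := klReal_map_scale ha hkl hP2.2.2.1
    have hinth' : Integrable h (Measure.map (fun s => a * s) ν) := by
      rw [integrable_map_measure hmeas.aestronglyMeasurable hmeasa.aemeasurable]
      exact hinth
    have hintegral : ∫ x, h x ∂(Measure.map (fun s => a * s) ν) = ∫ s, h (a * s) ∂ν :=
      integral_map hmeasa.aemeasurable hmeas.aestronglyMeasurable
    refine ⟨hkl', hinth', ?_⟩
    rw [hintegral, hklval, hP2.2.2.2]
    ring
  refine ⟨part1, ?_⟩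
  rw [ereal_sub_sub]
  apply sSup_shift _ _ ((1 - a ^ 2) / 2 + Real.log a)
  · rintro x ⟨ν, hP2, hkl, hinth, rfl⟩
    obtain ⟨hiso, hrest⟩ := part1 ν hP2
    obtain ⟨hkl', hinth', heq⟩ := hrest hkl hinth
    refine ⟨(((∫ s, h s ∂(Measure.map (fun s => a * s) ν))
        - klReal (Measure.map (fun s => a * s) ν) : ℝ) : EReal),
      ⟨Measure.map (fun s => a * s) ν, hiso, hkl', hinth', rfl⟩, ?_⟩
    rw [← EReal.coe_sub]
    exact congrArg Real.toEReal (by rw [heq]; ring)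
  · rintro y ⟨ν', hP2', hkl', hinth', rfl⟩
    haveI := hP2'.1
    have hmapback : Measure.map (fun s => a * s) (Measure.map (fun x => a⁻¹ * x) ν') = ν' := by
      rw [Measure.map_map hmeasa hmeasainv]
      have hid : (fun s => a * s) ∘ (fun x : ℝ => a⁻¹ * x) = id := by
        funext x; simp [mul_inv_cancel_left₀ ha0]
      rw [hid, Measure.map_id]
    have hP2 : IsP2 (Measure.map (fun x => a⁻¹ * x) ν') ((fun s => a * s) ⁻¹' I) 1 := by
      have hset : (fun x : ℝ => a⁻¹ * x) ⁻¹' ((fun s => a * s) ⁻¹' I) = I := by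
        ext x; simp [Set.mem_preimage, mul_inv_cancel_left₀ ha0]
      have hin : IsP2 ν' ((fun x : ℝ => a⁻¹ * x) ⁻¹' ((fun s => a * s) ⁻¹' I)) (a ^ 2) := by
        rw [hset]; exact hP2'
      have hout := isP2_map_scale (inv_pos.mpr ha) (hImeas.preimage hmeasa) hin
      rwa [show a⁻¹ ^ 2 * a ^ 2 = 1 by rw [← mul_pow, inv_mul_cancel₀ ha0, one_pow]] at hout
    have hklν : FiniteKL (Measure.map (fun x => a⁻¹ * x) ν') :=
      (klReal_map_scale (inv_pos.mpr ha) hkl' hP2'.2.2.1).1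
    have hinthν : Integrable (fun s => h (a * s)) (Measure.map (fun x => a⁻¹ * x) ν') := by
      rw [integrable_map_measure (show AEStronglyMeasurable (fun s : ℝ => h (a * s))
          (Measure.map (fun x : ℝ => a⁻¹ * x) ν') from
          ((hmeas.comp hmeasa).aestronglyMeasurable))
        hmeasainv.aemeasurable]
      refine hinth'.congr (ae_of_all _ fun x => ?_)
      simp [Function.comp, mul_inv_cancel_left₀ ha0]
    obtain ⟨hiso, hrest⟩ := part1 _ hP2
    obtain ⟨hkl2, hinth2, heq⟩ := hrest hklν hinthν
    rw [hmapback] at heq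
    refine ⟨(((∫ s, h (a * s) ∂(Measure.map (fun x => a⁻¹ * x) ν'))
        - klReal (Measure.map (fun x => a⁻¹ * x) ν') : ℝ) : EReal),
      ⟨Measure.map (fun x => a⁻¹ * x) ν', hP2, hklν, hinthν, rfl⟩, ?_⟩
    rw [← EReal.coe_sub]
    exact congrArg Real.toEReal (by rw [heq]; ring)

end WignerLDP
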